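/- Suppose F : [0,1] → ℝ is thrice continuously differentiable with F''(x) > 0 and F'''(x) ≥ 0 for all x ∈ (0,1). Then for all a, y, b in [0,1] with a < y < b, one has 2(b-y)[F(b) - (b-y)F'(b) + (1/2)(b-y)^2 F''(b) - F(y)] + (y-a)[F(b) - (b-y)F'(y) + (b-y)^2 F''(y) - F(y)] > 0. -/

import Mathlib

theorem stmt_3 (F F' F'' F''' : ℝ → ℝ)
    (hF1 : ∀ x ∈ Set.Icc (0 : ℝ) 1, HasDerivAt F (F' x) x)
    (hF2 : ∀ x ∈ Set.Icc (0 : ℝ) 1, HasDerivAt F' (F'' x) x)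
    (hF3 : ∀ x ∈ Set.Icc (0 : ℝ) 1, HasDerivAt F'' (F''' x) x)
    (hcont : ContinuousOn F''' (Set.Icc (0 : ℝ) 1))
    (hpos : ∀ x ∈ Set.Ioo (0 : ℝ) 1, 0 < F'' x)
    (hnn : ∀ x ∈ Set.Ioo (0 : ℝ) 1, 0 ≤ F''' x)
    (a y b : ℝ) (ha : 0 ≤ a) (hay : a < y) (hyb : y < b) (hb : b ≤ 1) :
    0 < 2 * (b - y) * (F b - (b - y) * F' b + (1 / 2) * (b - y) ^ 2 * F'' b - F y)
        + (y - a) * (F b - (b - y) * F' y + (b - y) ^ 2 * F'' y - F y) := by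
  have hy0 : 0 < y := lt_of_le_of_lt ha hay
  have hsub : Set.Icc y b ⊆ Set.Icc (0 : ℝ) 1 :=
    Set.Icc_subset_Icc hy0.le hb
  have hsubo : Set.Ioo y b ⊆ Set.Ioo (0 : ℝ) 1 :=
    Set.Ioo_subset_Ioo hy0.le hb
  have hyI : y ∈ Set.Ioo (0:ℝ) 1 := ⟨hy0, lt_of_lt_of_le hyb hb⟩
  -- Continuity facts
  have hcF : ContinuousOn F (Set.Icc y b) := fun x hx =>
    ((hF1 x (hsub hx)).continuousAt).continuousWithinAt
  have hcF' : ContinuousOn F' (Set.Icc y b) := fun x hx =>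
    ((hF2 x (hsub hx)).continuousAt).continuousWithinAt
  have hcF'' : ContinuousOn F'' (Set.Icc y b) := fun x hx =>
    ((hF3 x (hsub hx)).continuousAt).continuousWithinAt
  -- F'' is monotone on [y,b]
  have hmono : MonotoneOn F'' (Set.Icc y b) := by
    apply monotoneOn_of_deriv_nonneg (convex_Icc y b) hcF''
    · intro x hx
      rw [interior_Icc] at hx
      exact ((hF3 x (hsub (Set.Ioo_subset_Icc_self hx))).differentiableAt).differentiableWithinAt
    · intro x hx
      rw [interior_Icc] at hx
      rw [(hF3 x (hsub (Set.Ioo_subset_Icc_self hx))).deriv]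
      exact hnn x (hsubo hx)
  -- T2 > 0
  have T2pos : 0 < F b - (b - y) * F' y + (b - y) ^ 2 * F'' y - F y := by
    obtain ⟨c, hc, hceq⟩ := exists_hasDerivAt_eq_slope F F' hyb hcF
      (fun x hx => hF1 x (hsub (Set.Ioo_subset_Icc_self hx)))
    -- F' c = (F b - F y)/(b - y)
    have hFc : F b - F y = F' c * (b - y) := by
      rw [eq_div_iff (sub_ne_zero.mpr hyb.ne')] at hceq
      linarith [hceq]
    -- F' c > F' y since F' strictly increasing on [y,c]
    have hstrict : StrictMonoOn F' (Set.Icc y b) := by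
      apply strictMonoOn_of_deriv_pos (convex_Icc y b) hcF'
      intro x hx
      rw [interior_Icc] at hx
      rw [(hF2 x (hsub (Set.Ioo_subset_Icc_self hx))).deriv]
      exact hpos x (hsubo hx)
    have h1 : F' y < F' c := hstrict ⟨le_refl y, hyb.le⟩ ⟨hc.1.le, hc.2.le⟩ hc.1
    have h2 : 0 < F'' y := hpos y hyI
    nlinarith [sq_nonneg (b - y)]
  -- T1 ≥ 0 via auxiliary function
  set φ : ℝ → ℝ := fun t => F b - (b - t) * F' b + (1/2) * (b - t)^2 * F'' b - F t with hφ
  have hφd : ∀ x ∈ Set.Icc (0:ℝ) 1,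
      HasDerivAt φ (F' b - (b - x) * F'' b - F' x) x := by
    intro x hx
    have h1 : HasDerivAt (fun t : ℝ => b - t) (-1) x := by
      simpa using (hasDerivAt_id x).const_sub b
    have h2 : HasDerivAt (fun t : ℝ => F b - (b - t) * F' b) (F' b) x := by
      have := (h1.mul_const (F' b)).const_sub (F b)
      simpa using this
    have h3 : HasDerivAt (fun t : ℝ => (1/2) * (b - t)^2 * F'' b) (-(b - x) * F'' b) x := by
      have := (((h1.fun_pow 2).const_mul ((1:ℝ)/2)).mul_const (F'' b))
      exact this.congr_deriv (by ring)
    have := (h2.add h3).sub (hF1 x hx)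
    exact this.congr_deriv (by ring)
  have hφanti : AntitoneOn φ (Set.Icc y b) := by
    apply antitoneOn_of_deriv_nonpos (convex_Icc y b)
    · intro x hx
      exact ((hφd x (hsub hx)).continuousAt).continuousWithinAt
    · intro x hx
      rw [interior_Icc] at hx
      exact ((hφd x (hsub (Set.Ioo_subset_Icc_self hx))).differentiableAt).differentiableWithinAt
    · intro x hx
      rw [interior_Icc] at hx
      rw [(hφd x (hsub (Set.Ioo_subset_Icc_self hx))).deriv]
      -- show F' b - (b - x) * F'' b - F' x ≤ 0
      obtain ⟨c, hc, hceq⟩ := exists_hasDerivAt_eq_slope F' F'' hx.2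
        (hcF'.mono (Set.Icc_subset_Icc hx.1.le le_rfl))
        (fun t ht => hF2 t (hsub ⟨lt_trans hx.1 ht.1 |>.le, ht.2.le⟩))
      have hbx : 0 < b - x := by linarith [hx.2]
      have heq : F' b - F' x = F'' c * (b - x) := by
        rw [eq_div_iff (sub_ne_zero.mpr hx.2.ne')] at hceq
        linarith [hceq]
      have hle : F'' c ≤ F'' b :=
        hmono ⟨(lt_trans hx.1 hc.1).le, hc.2.le⟩ ⟨hyb.le, le_rfl⟩ hc.2.le
      nlinarith
  have hφb : φ b = 0 := by simp [hφ]
  have T1nn : 0 ≤ F b - (b - y) * F' b + (1/2) * (b - y)^2 * F'' b - F y := by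
    have := hφanti ⟨le_refl y, hyb.le⟩ ⟨hyb.le, le_refl b⟩ hyb.le
    rw [hφb] at this
    simpa [hφ] using this
  nlinarith [T2pos, T1nn, sub_pos.mpr hyb, sub_pos.mpr hay]
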